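/- arXiv:2302.04938 — 3 statements merged into one kernel-verified Lean document; each statement's English description precedes it below -/
import Mathlib

section
/- For a swap market with concave forward exchange functions f₁, f₂ having f₁(0) = f₂(0) = 0, the zero trade is optimal for the arbitrage problem with prices ν₁, ν₂ > 0 if and only if f₁′(0) ≤ ν₁/ν₂ ≤ 1/f₂′(0) (interpreting 1/f₂′(0) = ∞ when f₂′(0) = 0). -/
open Filter Topology Set

lemma Icidiff : Set.Ici (0:ℝ) \ {0} = Set.Ioi 0 := by
  ext x
  simp [lt_iff_le_and_ne, and_comm, eq_comm]

lemma deriv_le_of_le_linear {f : ℝ → ℝ} {d c : ℝ}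
    (hd : HasDerivWithinAt f d (Set.Ici 0) 0)
    (h : ∀ t > (0:ℝ), f t - f 0 ≤ c * t) : d ≤ c := by
  have htend := hasDerivWithinAt_iff_tendsto_slope.1 hd
  rw [Icidiff] at htend
  refine le_of_tendsto htend ?_
  filter_upwards [self_mem_nhdsWithin] with t ht
  have ht' : (0:ℝ) < t := ht
  rw [slope_def_field]
  rw [div_le_iff₀ (by simpa using ht')]
  simpa [mul_comm] using h t ht'

lemma concave_tangent_bound {f : ℝ → ℝ} {d : ℝ} (hc : ConcaveOn ℝ (Set.Ici 0) f)
    (hd : HasDerivWithinAt f d (Set.Ici 0) 0) {δ : ℝ} (hδ : 0 ≤ δ) :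
    f δ ≤ f 0 + d * δ := by
  rcases eq_or_lt_of_le hδ with rfl | hδ
  · simp
  have key : (f δ - f 0) / δ ≤ d := by
    have htend := hasDerivWithinAt_iff_tendsto_slope.1 hd
    rw [Icidiff] at htend
    refine ge_of_tendsto htend ?_
    have h1 : ∀ᶠ t in 𝓝[>] (0:ℝ), t < δ :=
      eventually_nhdsWithin_of_eventually_nhds (eventually_lt_nhds hδ)
    filter_upwards [self_mem_nhdsWithin, h1] with t ht htδ
    have ht' : (0:ℝ) < t := ht
    rw [slope_def_field]
    have hsec := (hc.neg).secant_mono (a := 0) (x := t) (y := δ)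
      Set.self_mem_Ici ht'.le hδ.le ht'.ne' hδ.ne' htδ.le
    simp only [Pi.neg_apply, sub_zero] at hsec ⊢
    rw [div_le_div_iff₀ ht' hδ] at hsec
    rw [div_le_div_iff₀ hδ ht']
    nlinarith
  rw [div_le_iff₀ hδ] at key
  linarith

lemma bddAbove_section₁ (T : Set (ℝ × ℝ)) (hT : Convex ℝ T) (hTc : IsClosed T)
    (h0 : (0, 0) ∈ T) (hnofree : ∀ Δ ∈ T, 0 ≤ Δ.1 → 0 ≤ Δ.2 → Δ = (0, 0))
    (δ : ℝ) : BddAbove {l : ℝ | (-δ, l) ∈ T} := by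
  by_contra hb
  have hseq : ∀ n : ℕ, ∃ l : ℝ, (-δ, l) ∈ T ∧ (n : ℝ) + 1 < l := by
    intro n
    rcases not_bddAbove_iff.1 hb ((n : ℝ) + 1) with ⟨l, hl, hlt⟩
    exact ⟨l, hl, hlt⟩
  choose l hlT hlgt using hseq
  have hl1 : ∀ n, (1:ℝ) ≤ l n := fun n => by
    have := hlgt n; have : (0:ℝ) ≤ (n:ℝ) := Nat.cast_nonneg n; linarith [hlgt n]
  have hlpos : ∀ n, (0:ℝ) < l n := fun n => lt_of_lt_of_le one_pos (hl1 n)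
  have hmem : ∀ n, ((-δ / l n, (1:ℝ)) : ℝ × ℝ) ∈ T := by
    intro n
    have hlp := hlpos n
    have h := hT (hlT n) h0 (a := 1 / l n) (b := 1 - 1 / l n)
      (by positivity)
      (by rw [sub_nonneg, div_le_one hlp]; exact hl1 n)
      (by ring)
    have heq : ((1:ℝ)/l n) • ((-δ, l n) : ℝ × ℝ) + (1 - 1/l n) • (((0:ℝ),(0:ℝ)) : ℝ × ℝ)
        = (-δ / l n, 1) := by
      rw [Prod.ext_iff]
      constructor <;> · simp [Prod.smul_mk]; field_simp
    rw [heq] at h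
    exact h
  have hltop : Tendsto l atTop atTop := by
    apply tendsto_atTop_mono (f := fun n : ℕ => (n : ℝ)) (fun n => by linarith [hlgt n])
      tendsto_natCast_atTop_atTop
  have htend : Tendsto (fun n => ((-δ / l n, (1:ℝ)) : ℝ × ℝ)) atTop (𝓝 ((0:ℝ), (1:ℝ))) :=
    (Tendsto.div_atTop tendsto_const_nhds hltop).prodMk_nhds tendsto_const_nhds
  have h01 : ((0:ℝ), (1:ℝ)) ∈ T := hTc.mem_of_tendsto htend (Eventually.of_forall hmem)
  have := hnofree _ h01 le_rfl zero_le_one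
  simp [Prod.ext_iff] at this

lemma bddAbove_section₂ (T : Set (ℝ × ℝ)) (hT : Convex ℝ T) (hTc : IsClosed T)
    (h0 : (0, 0) ∈ T) (hnofree : ∀ Δ ∈ T, 0 ≤ Δ.1 → 0 ≤ Δ.2 → Δ = (0, 0))
    (δ : ℝ) : BddAbove {l : ℝ | (l, -δ) ∈ T} := by
  by_contra hb
  have hseq : ∀ n : ℕ, ∃ l : ℝ, (l, -δ) ∈ T ∧ (n : ℝ) + 1 < l := by
    intro n
    rcases not_bddAbove_iff.1 hb ((n : ℝ) + 1) with ⟨l, hl, hlt⟩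
    exact ⟨l, hl, hlt⟩
  choose l hlT hlgt using hseq
  have hl1 : ∀ n, (1:ℝ) ≤ l n := fun n => by
    have : (0:ℝ) ≤ (n:ℝ) := Nat.cast_nonneg n; linarith [hlgt n]
  have hlpos : ∀ n, (0:ℝ) < l n := fun n => lt_of_lt_of_le one_pos (hl1 n)
  have hmem : ∀ n, (((1:ℝ), -δ / l n) : ℝ × ℝ) ∈ T := by
    intro n
    have hlp := hlpos n
    have h := hT (hlT n) h0 (a := 1 / l n) (b := 1 - 1 / l n)
      (by positivity)
      (by rw [sub_nonneg, div_le_one hlp]; exact hl1 n)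
      (by ring)
    have heq : ((1:ℝ)/l n) • ((l n, -δ) : ℝ × ℝ) + (1 - 1/l n) • (((0:ℝ),(0:ℝ)) : ℝ × ℝ)
        = (1, -δ / l n) := by
      rw [Prod.ext_iff]
      constructor <;> · simp [Prod.smul_mk]; field_simp
    rw [heq] at h
    exact h
  have hltop : Tendsto l atTop atTop := by
    apply tendsto_atTop_mono (f := fun n : ℕ => (n : ℝ)) (fun n => by linarith [hlgt n])
      tendsto_natCast_atTop_atTop
  have htend : Tendsto (fun n => (((1:ℝ), -δ / l n) : ℝ × ℝ)) atTop (𝓝 ((1:ℝ), (0:ℝ))) :=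
    (tendsto_const_nhds).prodMk_nhds (Tendsto.div_atTop tendsto_const_nhds hltop)
  have h01 : ((1:ℝ), (0:ℝ)) ∈ T := hTc.mem_of_tendsto htend (Eventually.of_forall hmem)
  have := hnofree _ h01 zero_le_one le_rfl
  simp [Prod.ext_iff] at this

/-- No-trade condition: for a swap market, the zero trade is optimal for prices
ν₁, ν₂ > 0 if and only if f₁′(0) ≤ ν₁/ν₂ ≤ 1/f₂′(0) (with 1/f₂′(0) = ∞ when
f₂′(0) = 0; the condition is written multiplicatively to encode this convention). -/
theorem no_trade_condition (T : Set (ℝ × ℝ)) (hT : Convex ℝ T) (hTc : IsClosed T)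
    (h0 : (0, 0) ∈ T)
    (hnofree : ∀ Δ ∈ T, 0 ≤ Δ.1 → 0 ≤ Δ.2 → Δ = (0, 0))
    (f₁ f₂ : ℝ → ℝ) (ν₁ ν₂ d₁ d₂ : ℝ)
    (hf₁ : ∀ δ ≥ (0 : ℝ), f₁ δ = sSup {l : ℝ | (-δ, l) ∈ T})
    (hf₂ : ∀ δ ≥ (0 : ℝ), f₂ δ = sSup {l : ℝ | (l, -δ) ∈ T})
    (hf₁0 : f₁ 0 = 0) (hf₂0 : f₂ 0 = 0)
    (hc₁ : ConcaveOn ℝ (Set.Ici 0) f₁) (hc₂ : ConcaveOn ℝ (Set.Ici 0) f₂)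
    (hd₁ : HasDerivWithinAt f₁ d₁ (Set.Ici 0) 0)
    (hd₂ : HasDerivWithinAt f₂ d₂ (Set.Ici 0) 0)
    (hd₁0 : 0 ≤ d₁) (hd₂0 : 0 ≤ d₂)
    (hν₁ : 0 < ν₁) (hν₂ : 0 < ν₂) :
    (∀ Δ ∈ T, ν₁ * Δ.1 + ν₂ * Δ.2 ≤ 0) ↔ (ν₂ * d₁ ≤ ν₁ ∧ ν₁ * d₂ ≤ ν₂) := by
  constructor
  · intro H
    constructor
    · have hub : ∀ t > (0:ℝ), f₁ t - f₁ 0 ≤ (ν₁ / ν₂) * t := by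
        intro t ht
        rw [hf₁0, sub_zero, hf₁ t ht.le]
        apply Real.sSup_le
        · intro l hl
          have := H (-t, l) hl
          simp only at this
          rw [div_mul_eq_mul_div, le_div_iff₀ hν₂]
          nlinarith
        · positivity
      have := deriv_le_of_le_linear hd₁ hub
      calc ν₂ * d₁ ≤ ν₂ * (ν₁ / ν₂) := mul_le_mul_of_nonneg_left this hν₂.le
        _ = ν₁ := mul_div_cancel₀ _ hν₂.ne'
    · have hub : ∀ t > (0:ℝ), f₂ t - f₂ 0 ≤ (ν₂ / ν₁) * t := by
        intro t ht
        rw [hf₂0, sub_zero, hf₂ t ht.le]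
        apply Real.sSup_le
        · intro l hl
          have := H (l, -t) hl
          simp only at this
          rw [div_mul_eq_mul_div, le_div_iff₀ hν₁]
          nlinarith
        · positivity
      have := deriv_le_of_le_linear hd₂ hub
      calc ν₁ * d₂ ≤ ν₁ * (ν₂ / ν₁) := mul_le_mul_of_nonneg_left this hν₁.le
        _ = ν₂ := mul_div_cancel₀ _ hν₁.ne'
  · rintro ⟨h1, h2⟩ Δ hΔ
    rcases le_or_gt Δ.1 0 with hΔ1 | hΔ1
    · have hδ : (0:ℝ) ≤ -Δ.1 := by linarith
      have hmem : Δ.2 ∈ {l : ℝ | (-(-Δ.1), l) ∈ T} := by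
        simp only [Set.mem_setOf_eq, neg_neg]
        exact hΔ
      have hle : Δ.2 ≤ f₁ (-Δ.1) := by
        rw [hf₁ _ hδ]
        exact le_csSup (bddAbove_section₁ T hT hTc h0 hnofree _) hmem
      have htan : f₁ (-Δ.1) ≤ f₁ 0 + d₁ * (-Δ.1) := concave_tangent_bound hc₁ hd₁ hδ
      rw [hf₁0, zero_add] at htan
      nlinarith [mul_le_mul_of_nonneg_left (hle.trans htan) hν₂.le,
        mul_le_mul_of_nonneg_right h1 hδ]
    · rcases le_or_gt Δ.2 0 with hΔ2 | hΔ2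
      · have hδ : (0:ℝ) ≤ -Δ.2 := by linarith
        have hmem : Δ.1 ∈ {l : ℝ | (l, -(-Δ.2)) ∈ T} := by
          simp only [Set.mem_setOf_eq, neg_neg]
          exact hΔ
        have hle : Δ.1 ≤ f₂ (-Δ.2) := by
          rw [hf₂ _ hδ]
          exact le_csSup (bddAbove_section₂ T hT hTc h0 hnofree _) hmem
        have htan : f₂ (-Δ.2) ≤ f₂ 0 + d₂ * (-Δ.2) := concave_tangent_bound hc₂ hd₂ hδ
        rw [hf₂0, zero_add] at htan
        nlinarith [mul_le_mul_of_nonneg_left (hle.trans htan) hν₁.le,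
          mul_le_mul_of_nonneg_right h2 hδ]
      · have := hnofree Δ hΔ hΔ1.le hΔ2.le
        rw [this]
        simp
end

section
/- Let f₁: ℝ₊ → ℝ be concave with bounded liquidity, δ₁⁻ = inf{δ ≥ 0 | f₁(δ) = sup f₁}, and let f₁⁻(δ₁⁻) = lim_{h→0⁺}(f₁(δ₁⁻) − f₁(δ₁⁻ − h))/h be the left derivative at δ₁⁻. If f₁⁻(δ₁⁻) ≥ ν₁/ν₂ with ν₁, ν₂ > 0, then δ₁⁻ is a maximizer of −ν₁δ + ν₂f₁(δ) over δ ≥ 0. -/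
/-- Bounded liquidity: if the minimum supported price (the left derivative of f₁ at
δ₁⁻ = inf{δ ≥ 0 | f₁(δ) = sup f₁}) is at least ν₁/ν₂, then δ₁⁻ maximizes
−ν₁δ + ν₂ f₁(δ) over δ ≥ 0. -/
theorem bounded_liquidity_full_trade_optimal (f₁ : ℝ → ℝ) (ν₁ ν₂ δm d : ℝ)
    (hconc : ConcaveOn ℝ (Set.Ici 0) f₁)
    (hcont : ContinuousOn f₁ (Set.Ici 0))
    (hbdd : BddAbove (f₁ '' Set.Ici 0))
    (hattain : ∃ δ ≥ (0 : ℝ), f₁ δ = sSup (f₁ '' Set.Ici 0))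
    (hδm : δm = sInf {δ : ℝ | 0 ≤ δ ∧ f₁ δ = sSup (f₁ '' Set.Ici 0)})
    (hd : HasDerivWithinAt f₁ d (Set.Iic δm ∩ Set.Ici 0) δm)
    (hν₁ : 0 < ν₁) (hν₂ : 0 < ν₂)
    (hcond : ν₁ / ν₂ ≤ d) :
    ∀ δ ≥ (0 : ℝ), -ν₁ * δ + ν₂ * f₁ δ ≤ -ν₁ * δm + ν₂ * f₁ δm := by
  set M := sSup (f₁ '' Set.Ici 0) with hM
  set S : Set ℝ := {δ : ℝ | 0 ≤ δ ∧ f₁ δ = M} with hS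
  obtain ⟨δ₀, hδ₀, hfδ₀⟩ := hattain
  have hSne : S.Nonempty := ⟨δ₀, hδ₀, hfδ₀⟩
  have hSbdd : BddBelow S := ⟨0, fun x hx => hx.1⟩
  -- S is closed
  have hSclosed : IsClosed S := by
    have heq : S = Set.Ici 0 ∩ f₁ ⁻¹' {M} := by
      ext x; simp [hS, Set.mem_setOf_eq]
    rw [heq]
    exact hcont.preimage_isClosed_of_isClosed isClosed_Ici isClosed_singleton
  have hδmS : δm ∈ S := hδm ▸ hSclosed.csInf_mem hSne hSbdd
  have hδm0 : 0 ≤ δm := hδmS.1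
  have hfδm : f₁ δm = M := hδmS.2
  intro δ hδ
  rcases le_or_gt δm δ with h | h
  · have hle : f₁ δ ≤ M := le_csSup hbdd ⟨δ, hδ, rfl⟩
    nlinarith
  · -- δ < δm; use concavity and the left derivative
    have hslope : ν₁ / ν₂ ≤ (f₁ δm - f₁ δ) / (δm - δ) := by
      refine le_trans hcond ?_
      have hnb : (nhdsWithin δm (Set.Ioo δ δm)).NeBot := by
        rw [nhdsWithin_Ioo_eq_nhdsLT h]; infer_instance
      have htend : Filter.Tendsto (slope f₁ δm) (nhdsWithin δm (Set.Ioo δ δm)) (nhds d) := by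
        have := (hasDerivWithinAt_iff_tendsto_slope).mp hd
        refine this.mono_left (nhdsWithin_mono _ ?_)
        intro x hx
        exact ⟨⟨le_of_lt hx.2, le_trans hδ (le_of_lt hx.1)⟩, ne_of_lt hx.2⟩
      refine le_of_tendsto htend (Filter.eventually_of_mem self_mem_nhdsWithin ?_)
      intro x hx
      have hxs : x ∈ Set.Ici (0:ℝ) := le_trans hδ (le_of_lt hx.1)
      have h1 := (hconc.neg.secant_mono (a := δm) (x := δ) (y := x)
        (Set.mem_Ici.mpr hδm0) (Set.mem_Ici.mpr hδ) hxs
        (ne_of_lt h) (ne_of_lt hx.2) (le_of_lt hx.1))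
      simp only [Pi.neg_apply] at h1
      rw [show -f₁ δ - -f₁ δm = f₁ δm - f₁ δ by ring,
        show -f₁ x - -f₁ δm = f₁ δm - f₁ x by ring,
        show δ - δm = -(δm - δ) by ring, show x - δm = -(δm - x) by ring,
        div_neg, div_neg, neg_le_neg_iff] at h1
      rw [slope_def_field, show f₁ x - f₁ δm = -(f₁ δm - f₁ x) by ring,
        show x - δm = -(δm - x) by ring, neg_div_neg_eq]
      exact h1
    have hpos : 0 < δm - δ := by linarith
    rw [div_le_div_iff₀ hν₂ hpos] at hslope
    nlinarith
end

section
/- For the weighted geometric mean CFMM with parameter w ∈ (0,1), η = w/(1−w), fee γ, reserves R₁, R₂ > 0, and prices ν₁, ν₂ > 0, the point δ₁⋆ = max{δ₁, 0} with δ₁ = (R₁/γ)((ηγ(ν₂/ν₁)(R₂/R₁))^{1/(η+1)} − 1) maximizes −ν₁δ + ν₂f₁(δ) over δ ≥ 0, where f₁(δ) = R₂(1 − (1 + γδ/R₁)^{−η}). -/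
/-- Bernoulli-type bound: for `t > 0` and `η > 0`, `1 - η (t - 1) ≤ t ^ (-η)`. -/
lemma rpow_neg_tangent_one {η t : ℝ} (hη : 0 < η) (ht : 0 < t) :
    1 - η * (t - 1) ≤ t ^ (-η) := by
  rw [Real.rpow_def_of_pos ht, mul_comm]
  have h1 : Real.log t ≤ t - 1 := Real.log_le_sub_one_of_pos ht
  have h2 : Real.log t * -η + 1 ≤ Real.exp (Real.log t * -η) :=
    Real.add_one_le_exp _
  nlinarith [mul_le_mul_of_nonneg_left h1 hη.le]

/-- Tangent line inequality for the convex function `x ↦ x ^ (-η)` on `(0, ∞)`. -/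
lemma rpow_neg_tangent {η x y : ℝ} (hη : 0 < η) (hx : 0 < x) (hy : 0 < y) :
    y ^ (-η) - η * y ^ (-η - 1) * (x - y) ≤ x ^ (-η) := by
  have hxy : (0 : ℝ) < x / y := div_pos hx hy
  have h := rpow_neg_tangent_one hη hxy
  have hyp : (0 : ℝ) < y ^ (-η) := Real.rpow_pos_of_pos hy _
  have hmul : y ^ (-η) * (1 - η * (x / y - 1)) ≤ y ^ (-η) * (x / y) ^ (-η) :=
    mul_le_mul_of_nonneg_left h hyp.le
  have hrw : y ^ (-η) * (x / y) ^ (-η) = x ^ (-η) := by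
    rw [← Real.mul_rpow hy.le hxy.le, mul_div_cancel₀ _ (ne_of_gt hy)]
  have hrw2 : y ^ (-η - 1) = y ^ (-η) / y := by
    rw [Real.rpow_sub hy, Real.rpow_one]
  rw [hrw] at hmul
  rw [hrw2]
  calc y ^ (-η) - η * (y ^ (-η) / y) * (x - y)
      = y ^ (-η) * (1 - η * (x / y - 1)) := by field_simp
    _ ≤ x ^ (-η) := hmul

/-- Closed-form arbitrage for the geometric mean CFMM: δ₁⋆ = max{δ₁, 0} with
δ₁ = (R₁/γ)((ηγ(ν₂/ν₁)(R₂/R₁))^(1/(η+1)) − 1) maximizes −ν₁δ + ν₂ f₁(δ) over δ ≥ 0. -/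
theorem geom_mean_arbitrage_closed_form (w γ R₁ R₂ ν₁ ν₂ η : ℝ)
    (hw : 0 < w) (hw1 : w < 1) (hγ : 0 < γ) (hγ1 : γ ≤ 1)
    (hR₁ : 0 < R₁) (hR₂ : 0 < R₂) (hν₁ : 0 < ν₁) (hν₂ : 0 < ν₂)
    (hη : η = w / (1 - w))
    (f₁ : ℝ → ℝ) (hf₁ : ∀ δ, f₁ δ = R₂ * (1 - (1 + γ * δ / R₁) ^ (-η)))
    (δ₁ δstar : ℝ)
    (hδ₁ : δ₁ = R₁ / γ * ((η * γ * (ν₂ / ν₁) * (R₂ / R₁)) ^ (1 / (η + 1)) - 1))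
    (hδstar : δstar = max δ₁ 0) :
    ∀ δ ≥ (0 : ℝ), -ν₁ * δ + ν₂ * f₁ δ ≤ -ν₁ * δstar + ν₂ * f₁ δstar := by
  intro δ hδ
  have hηpos : 0 < η := by
    rw [hη]; exact div_pos hw (by linarith)
  have hη1 : 0 < η + 1 := by linarith
  set A : ℝ := η * γ * (ν₂ / ν₁) * (R₂ / R₁) with hA
  have hApos : 0 < A :=
    mul_pos (mul_pos (mul_pos hηpos hγ) (div_pos hν₂ hν₁)) (div_pos hR₂ hR₁)
  set B : ℝ := A ^ (1 / (η + 1)) with hB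
  have hBpos : 0 < B := Real.rpow_pos_of_pos hApos _
  have hBA : B ^ (η + 1) = A := by
    rw [hB, ← Real.rpow_mul hApos.le, one_div_mul_cancel (ne_of_gt hη1), Real.rpow_one]
  have hupos : (0 : ℝ) < 1 + γ * δ / R₁ := by
    have : 0 ≤ γ * δ / R₁ := by positivity
    linarith
  rcases le_or_gt δ₁ 0 with h0 | h0
  · -- boundary case: δstar = 0
    have hstar0 : δstar = 0 := by rw [hδstar, max_eq_right h0]
    have hB1 : B ≤ 1 := by
      have hRγ : 0 < R₁ / γ := div_pos hR₁ hγ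
      nlinarith [hδ₁ ▸ h0]
    have hA1 : A ≤ 1 := by
      calc A = B ^ (η + 1) := hBA.symm
        _ ≤ 1 := Real.rpow_le_one hBpos.le hB1 hη1.le
    have hcoef : η * γ * ν₂ * R₂ ≤ ν₁ * R₁ := by
      have h := mul_le_mul_of_nonneg_left hA1 (show (0:ℝ) ≤ ν₁ * R₁ by positivity)
      have heq : ν₁ * R₁ * A = η * γ * ν₂ * R₂ := by
        rw [hA]; field_simp
      linarith [heq ▸ h]
    have htan := rpow_neg_tangent_one hηpos hupos
    have h3 : ν₂ * R₂ * (η * (γ * δ / R₁)) ≤ ν₁ * δ := by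
      rw [show ν₂ * R₂ * (η * (γ * δ / R₁)) = η * γ * ν₂ * R₂ * δ / R₁ by ring,
        div_le_iff₀ hR₁]
      nlinarith [mul_le_mul_of_nonneg_right hcoef hδ]
    rw [hf₁, hf₁, hstar0]
    have hmul := mul_le_mul_of_nonneg_left htan (show (0:ℝ) ≤ ν₂ * R₂ by positivity)
    simp only [mul_zero, zero_div, add_zero, Real.one_rpow]
    nlinarith [hmul, h3]
  · -- interior case: δstar = δ₁
    have hstar : δstar = δ₁ := by rw [hδstar, max_eq_left h0.le]
    have hustar : 1 + γ * δ₁ / R₁ = B := by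
      rw [hδ₁]; field_simp; ring
    have hBinv : B ^ (-η - 1) * B ^ (η + 1) = 1 := by
      rw [show -η - 1 = -(η + 1) by ring, Real.rpow_neg hBpos.le,
        inv_mul_cancel₀ (ne_of_gt (Real.rpow_pos_of_pos hBpos _))]
    have hkey : ν₁ * R₁ * B ^ (η + 1) = η * γ * ν₂ * R₂ := by
      rw [hBA, hA]; field_simp
    have hν₁eq : ν₁ * R₁ = η * γ * ν₂ * R₂ * B ^ (-η - 1) := by
      have h2 : ν₁ * R₁ * B ^ (η + 1) * B ^ (-η - 1)
          = η * γ * ν₂ * R₂ * B ^ (-η - 1) := by rw [hkey]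
      rw [show ν₁ * R₁ * B ^ (η + 1) * B ^ (-η - 1)
          = ν₁ * R₁ * (B ^ (-η - 1) * B ^ (η + 1)) by ring, hBinv, mul_one] at h2
      exact h2
    have htan := rpow_neg_tangent hηpos hupos hBpos
    have hub : (1 + γ * δ / R₁) - B = γ * (δ - δ₁) / R₁ := by
      rw [← hustar]; ring
    have hlin : ν₂ * R₂ * (η * B ^ (-η - 1) * ((1 + γ * δ / R₁) - B)) = ν₁ * (δ - δ₁) := by
      rw [hub]
      rw [show ν₂ * R₂ * (η * B ^ (-η - 1) * (γ * (δ - δ₁) / R₁))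
          = η * γ * ν₂ * R₂ * B ^ (-η - 1) * (δ - δ₁) / R₁ by ring, ← hν₁eq]
      field_simp
    have hmul := mul_le_mul_of_nonneg_left htan (show (0:ℝ) ≤ ν₂ * R₂ by positivity)
    rw [hf₁, hf₁, hstar, hustar]
    linarith [hmul, hlin]
end
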